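/- Assume: φ ∈ C([0,∞)) ∩ C¹((0,∞)) with φ(0) = 0 and φ' > 0 on (0,∞); l ∈ C([0,∞)) with l > 0 on [0,∞); s ↦ s·φ'(s)/l(s) is integrable on (0,1) but not on (1,∞), so that K(t) = ∫₀^t s·φ'(s)/l(s) ds is an increasing bijection of [0,∞) onto itself; f ∈ C(ℝ) with f(0) = 0, f > 0 on (0,∞), and f C-increasing on (η̄₀,∞) for some η̄₀ ≥ 0 and C ≥ 1; ℘ ∈ C¹([0,∞)) with ℘ > 0 and ℘' ≥ 0 on (0,∞); a ∈ C([0,∞)) with a > 0. Let R < ∞ and let w ∈ C¹([0,R)) satisfy: w'(0) = 0, w ≥ 0, w' ≥ 0 on [0,R), t ↦ ℘(t)·φ(w'(t)) differentiable on (0,R) with derivative ℘(t)·a(t)·f(w(t))·l(|w'(t)|), and w(t) → ∞ as t → R⁻. Then the Keller–Osserman condition (KO_∞) holds: ∫_T^∞ ds/K⁻¹(F(s)) < ∞ for some T > η̄₀, where F(t) = ∫_{η̄₀}^t f(s) ds. -/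

import Mathlib

open Set MeasureTheory Filter Topology

/-- Given `C ≥ 1`, a function `h` is `C`-increasing on `I` if
`sup {h s : s ∈ I, s ≤ t} ≤ C * h t` for every `t ∈ I`. -/
def CIncreasingOn (C : ℝ) (h : ℝ → ℝ) (I : Set ℝ) : Prop :=
  ∀ s ∈ I, ∀ t ∈ I, s ≤ t → h s ≤ C * h t



/-- Inverse of a continuous strictly monotone function on a compact interval. -/
lemma exists_inv_on_Icc {φ : ℝ → ℝ} {a M : ℝ} (haM : a ≤ M)
    (hc : ContinuousOn φ (Icc a M)) (hsm : StrictMonoOn φ (Icc a M)) :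
    ∃ g : ℝ → ℝ, ContinuousOn g (Icc (φ a) (φ M)) ∧
      (∀ x ∈ Icc a M, g (φ x) = x) ∧
      (∀ y ∈ Icc (φ a) (φ M), φ (g y) = y ∧ g y ∈ Icc a M) := by
  have haMm : a ∈ Icc a M := ⟨le_rfl, haM⟩
  have hMm : M ∈ Icc a M := ⟨haM, le_rfl⟩
  have himg : φ '' Icc a M = Icc (φ a) (φ M) := by
    apply Subset.antisymm
    · rintro _ ⟨x, hx, rfl⟩
      exact ⟨hsm.monotoneOn haMm hx hx.1, hsm.monotoneOn hx hMm hx.2⟩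
    · exact intermediate_value_Icc haM hc
  haveI : OrdConnected (Icc a M) := Set.ordConnected_Icc
  haveI : OrdConnected (Icc (φ a) (φ M)) := Set.ordConnected_Icc
  let E : ↥(Icc a M) ≃o ↥(Icc (φ a) (φ M)) :=
    (hsm.orderIso φ _).trans (OrderIso.setCongr _ _ himg)
  have hEcoe : ∀ x : ↥(Icc a M), (E x : ℝ) = φ x := fun x => rfl
  refine ⟨fun y => if h : y ∈ Icc (φ a) (φ M) then (E.symm ⟨y, h⟩ : ℝ) else a, ?_, ?_, ?_⟩
  · rw [continuousOn_iff_continuous_restrict]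
    have : (Icc (φ a) (φ M)).restrict
        (fun y => if h : y ∈ Icc (φ a) (φ M) then (E.symm ⟨y, h⟩ : ℝ) else a)
        = fun y => (E.symm y : ℝ) := by
      funext y; exact dif_pos y.2
    convert continuous_subtype_val.comp E.symm.continuous using 1
    exact this
  · intro x hx
    have hmem : φ x ∈ Icc (φ a) (φ M) :=
      ⟨hsm.monotoneOn haMm hx hx.1, hsm.monotoneOn hx hMm hx.2⟩
    show (if h : φ x ∈ Icc (φ a) (φ M) then (E.symm ⟨φ x, h⟩ : ℝ) else a) = x
    rw [dif_pos hmem]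
    have : E ⟨x, hx⟩ = ⟨φ x, hmem⟩ := Subtype.ext (hEcoe ⟨x, hx⟩)
    rw [← this, E.symm_apply_apply]
  · intro y hy
    show φ (if h : y ∈ Icc (φ a) (φ M) then (E.symm ⟨y, h⟩ : ℝ) else a) = y ∧ (if h : y ∈ Icc (φ a) (φ M) then (E.symm ⟨y, h⟩ : ℝ) else a) ∈ Icc a M
    rw [dif_pos hy]
    have h1 : E (E.symm ⟨y, hy⟩) = ⟨y, hy⟩ := E.apply_symm_apply _
    have h2 : φ ((E.symm ⟨y, hy⟩ : ℝ)) = y := by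
      rw [← hEcoe]; rw [h1]
    exact ⟨h2, (E.symm ⟨y, hy⟩).2⟩

variable {J : ℝ → ℝ}

lemma aux_Jii (hJc : ContinuousOn J (Ioi 0)) (h0 : IntegrableOn J (Ioo 0 1))
    {x y : ℝ} (hx : 0 ≤ x) (hxy : x ≤ y) : IntervalIntegrable J volume x y := by
  rw [intervalIntegrable_iff_integrableOn_Ioc_of_le hxy]
  have hIoc : IntegrableOn J (Ioc 0 y) := by
    rw [integrableOn_Ioc_iff_integrableOn_Ioo]
    rcases le_or_gt y 1 with hy | hy
    · exact h0.mono_set (Ioo_subset_Ioo le_rfl hy)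
    · have h1 : IntegrableOn J (Icc 1 y) :=
        (hJc.mono (Icc_subset_Ioi_iff (by linarith) |>.mpr ?_)).integrableOn_Icc
      · have : Ioo 0 y ⊆ Ioo 0 1 ∪ Icc 1 y := by
          intro s hs
          rcases lt_or_ge s 1 with h | h
          · exact Or.inl ⟨hs.1, h⟩
          · exact Or.inr ⟨h, hs.2.le⟩
        exact (h0.union h1).mono_set this
      · norm_num
  exact hIoc.mono_set (Ioc_subset_Ioc hx le_rfl)

lemma aux_Kcont (hJc : ContinuousOn J (Ioi 0)) (h0 : IntegrableOn J (Ioo 0 1))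
    {K : ℝ → ℝ} (hK : ∀ t, K t = ∫ s in (0:ℝ)..t, J s) :
    ContinuousOn K (Ici 0) := by
  intro x hx
  have hmem : Icc 0 (x + 1) ∈ 𝓝[Ici 0] x := by
    refine mem_nhdsWithin.2 ⟨Iio (x + 1), isOpen_Iio, lt_add_one x, ?_⟩
    rintro y ⟨h1, h2⟩
    exact ⟨h2, le_of_lt h1⟩
  have hint : IntegrableOn J (Icc 0 (x + 1)) := by
    rw [integrableOn_Icc_iff_integrableOn_Ioc]
    have := aux_Jii hJc h0 (le_refl (0:ℝ)) (by linarith [hx.out] : (0:ℝ) ≤ x + 1)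
    rwa [intervalIntegrable_iff_integrableOn_Ioc_of_le (by linarith [hx.out])] at this
  have hcont := intervalIntegral.continuousOn_primitive (μ := volume) (f := J)
    (a := 0) (b := x + 1) hint
  have hcongr : ∀ y ∈ Icc (0:ℝ) (x + 1), K y = ∫ t in Ioc 0 y, J t := by
    intro y hy
    rw [hK y, intervalIntegral.integral_of_le hy.1]
  exact ((hcont.congr hcongr).continuousWithinAt ⟨hx.out, by linarith [hx.out]⟩).mono_of_mem_nhdsWithin
    hmem

lemma aux_Ksm (hJc : ContinuousOn J (Ioi 0)) (hJpos : ∀ s ∈ Ioi (0:ℝ), 0 < J s)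
    (h0 : IntegrableOn J (Ioo 0 1))
    {K : ℝ → ℝ} (hK : ∀ t, K t = ∫ s in (0:ℝ)..t, J s) :
    StrictMonoOn K (Ici 0) := by
  intro x hx y hy hxy
  have hposint : 0 < ∫ s in x..y, J s := by
    refine intervalIntegral.intervalIntegral_pos_of_pos_on
      (aux_Jii hJc h0 hx.out hxy.le) (fun s hs => hJpos s ?_) hxy
    exact lt_of_le_of_lt hx.out hs.1
  have hadd : K x + ∫ s in x..y, J s = K y := by
    rw [hK, hK]
    exact intervalIntegral.integral_add_adjacent_intervals
      (aux_Jii hJc h0 le_rfl hx.out) (aux_Jii hJc h0 hx.out hxy.le)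
  linarith

lemma aux_Kub (hJc : ContinuousOn J (Ioi 0)) (hJpos : ∀ s ∈ Ioi (0:ℝ), 0 < J s)
    (h0 : IntegrableOn J (Ioo 0 1)) (hinf : ¬ IntegrableOn J (Ioi 1))
    {K : ℝ → ℝ} (hK : ∀ t, K t = ∫ s in (0:ℝ)..t, J s) :
    ∀ y : ℝ, ∃ x, 0 ≤ x ∧ y ≤ K x := by
  by_contra h
  push_neg at h
  obtain ⟨y, hy⟩ := h
  apply hinf
  have hfi : ∀ n : ℕ, IntegrableOn J (Ioc 1 (1 + n)) := by
    intro n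
    have := aux_Jii hJc h0 (le_refl (0:ℝ)) (by positivity : (0:ℝ) ≤ 1 + n)
    rw [intervalIntegrable_iff_integrableOn_Ioc_of_le (by positivity)] at this
    exact this.mono_set (Ioc_subset_Ioc (by norm_num) le_rfl)
  refine integrableOn_Ioi_of_intervalIntegral_norm_bounded (y - K 1) 1 hfi
    (tendsto_atTop_add_const_left atTop 1 tendsto_natCast_atTop_atTop) ?_
  refine Eventually.of_forall fun n => ?_
  have h1n : (1:ℝ) ≤ 1 + n := by simp
  have hnorm : ∫ x in (1:ℝ)..(1 + n), ‖J x‖ = ∫ x in (1:ℝ)..(1 + n), J x := by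
    refine intervalIntegral.integral_congr fun u hu => ?_
    rw [uIcc_of_le h1n] at hu
    exact Real.norm_of_nonneg (hJpos u (by linarith [hu.1] : (0:ℝ) < u)).le
  have hadd : K 1 + ∫ x in (1:ℝ)..(1 + n), J x = K (1 + n) := by
    rw [hK, hK]
    exact intervalIntegral.integral_add_adjacent_intervals
      (aux_Jii hJc h0 le_rfl zero_le_one) (aux_Jii hJc h0 zero_le_one h1n)
  have := hy (1 + n) (by positivity)
  rw [hnorm]
  linarith

lemma aux_Ksurj (hJc : ContinuousOn J (Ioi 0)) (hJpos : ∀ s ∈ Ioi (0:ℝ), 0 < J s)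
    (h0 : IntegrableOn J (Ioo 0 1)) (hinf : ¬ IntegrableOn J (Ioi 1))
    {K : ℝ → ℝ} (hK : ∀ t, K t = ∫ s in (0:ℝ)..t, J s) :
    ∀ y : ℝ, 0 ≤ y → ∃ x, 0 ≤ x ∧ K x = y := by
  intro y hy
  obtain ⟨x, hx0, hxy⟩ := aux_Kub hJc hJpos h0 hinf hK y
  have hK0 : K 0 = 0 := by rw [hK]; simp
  have : y ∈ Icc (K 0) (K x) := by rw [hK0]; exact ⟨hy, hxy⟩
  obtain ⟨σ, hσmem, hσ⟩ := intermediate_value_Icc hx0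
    ((aux_Kcont hJc h0 hK).mono Icc_subset_Ici_self) this
  exact ⟨σ, hσmem.1, hσ⟩

lemma aux_Kd (hJc : ContinuousOn J (Ioi 0)) (h0 : IntegrableOn J (Ioo 0 1))
    {K : ℝ → ℝ} (hK : ∀ t, K t = ∫ s in (0:ℝ)..t, J s) :
    ∀ x : ℝ, 0 < x → HasDerivAt K (J x) x := by
  intro x hx
  have : HasDerivAt (fun u => ∫ s in (0:ℝ)..u, J s) (J x) x :=
    intervalIntegral.integral_hasDerivAt_right (aux_Jii hJc h0 le_rfl hx.le)
      (hJc.stronglyMeasurableAtFilter isOpen_Ioi x hx)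
      (hJc.continuousAt (Ioi_mem_nhds hx))
  exact (funext hK : K = _) ▸ this

variable {f F : ℝ → ℝ} {C ηb₀ : ℝ}

lemma aux_Fd (hfc : Continuous f) (hF : ∀ t, F t = ∫ s in ηb₀..t, f s) :
    ∀ t : ℝ, HasDerivAt F (f t) t := by
  intro t
  have : HasDerivAt (fun u => ∫ s in ηb₀..u, f s) (f t) t :=
    intervalIntegral.integral_hasDerivAt_right (hfc.intervalIntegrable _ _)
      (hfc.stronglyMeasurable.stronglyMeasurableAtFilter) hfc.continuousAt
  exact (funext hF : F = _) ▸ this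

lemma aux_fnn (hf0 : f 0 = 0) (hfpos : ∀ t : ℝ, 0 < t → 0 < f t) :
    ∀ x : ℝ, 0 ≤ x → 0 ≤ f x := by
  intro x hx
  rcases eq_or_lt_of_le hx with h | h
  · rw [← h, hf0]
  · exact (hfpos x h).le

lemma aux_Fmono (hηb₀ : 0 ≤ ηb₀) (hfc : Continuous f) (hf0 : f 0 = 0)
    (hfpos : ∀ t : ℝ, 0 < t → 0 < f t)
    (hF : ∀ t, F t = ∫ s in ηb₀..t, f s) : MonotoneOn F (Ici ηb₀) := by
  refine monotoneOn_of_deriv_nonneg (convex_Ici ηb₀)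
    (fun t _ => (aux_Fd hfc hF t).continuousAt.continuousWithinAt)
    (fun t _ => (aux_Fd hfc hF t).differentiableAt.differentiableWithinAt) ?_
  intro t ht
  rw [interior_Ici] at ht
  rw [(aux_Fd hfc hF t).deriv]
  exact aux_fnn hf0 hfpos t (le_trans hηb₀ (le_of_lt ht))

lemma aux_Fnn (hηb₀ : 0 ≤ ηb₀) (hfc : Continuous f) (hf0 : f 0 = 0)
    (hfpos : ∀ t : ℝ, 0 < t → 0 < f t)
    (hF : ∀ t, F t = ∫ s in ηb₀..t, f s) : ∀ x, ηb₀ ≤ x → 0 ≤ F x := by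
  intro x hx
  have h0 : F ηb₀ = 0 := by rw [hF]; simp
  rw [← h0]
  exact aux_Fmono hηb₀ hfc hf0 hfpos hF self_mem_Ici hx hx

lemma aux_Fsub (hfc : Continuous f) (hF : ∀ t, F t = ∫ s in ηb₀..t, f s) (x y : ℝ) :
    F y - F x = ∫ s in x..y, f s := by
  rw [hF, hF]
  exact intervalIntegral.integral_interval_sub_left (hfc.intervalIntegrable _ _)
    (hfc.intervalIntegrable _ _)

lemma aux_Ftop (hηb₀ : 0 ≤ ηb₀) (hC : 1 ≤ C) (hfc : Continuous f) (hf0 : f 0 = 0)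
    (hfpos : ∀ t : ℝ, 0 < t → 0 < f t) (hfCinc : ∀ s ∈ Ioi ηb₀, ∀ t ∈ Ioi ηb₀, s ≤ t → f s ≤ C * f t)
    (hF : ∀ t, F t = ∫ s in ηb₀..t, f s) : Tendsto F atTop atTop := by
  set s0 := ηb₀ + 1 with hs0
  have hC0 : (0:ℝ) < C := lt_of_lt_of_le one_pos hC
  have hfs0 : 0 < f s0 := hfpos s0 (by positivity)
  have hlow : ∀ t ≥ s0, F s0 + (t - s0) * (f s0 / C) ≤ F t := by
    intro t ht
    have hsub := aux_Fsub hfc hF s0 t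
    have hmono : ∫ s in s0..t, (f s0 / C) ≤ ∫ s in s0..t, f s := by
      refine intervalIntegral.integral_mono_on ht (intervalIntegrable_const)
        (hfc.intervalIntegrable _ _) ?_
      intro x hx
      rw [div_le_iff₀ hC0]
      have hxI : x ∈ Ioi ηb₀ := lt_of_lt_of_le (by simp [hs0]) hx.1
      have := hfCinc s0 (by simp [hs0]) x hxI hx.1
      linarith [this]
    rw [intervalIntegral.integral_const] at hmono
    simp only [smul_eq_mul] at hmono
    linarith
  have hcomp : Tendsto (fun t => F s0 + (t - s0) * (f s0 / C)) atTop atTop := by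
    apply tendsto_atTop_add_const_left
    have : Tendsto (fun t : ℝ => t - s0) atTop atTop :=
      tendsto_atTop_add_const_right atTop (-s0) tendsto_id
    exact this.atTop_mul_const (by positivity)
  exact tendsto_atTop_mono' atTop
    (by filter_upwards [eventually_ge_atTop s0] with t ht using hlow t ht) hcomp

lemma aux_Fdouble (hηb₀ : 0 ≤ ηb₀) (hC : 1 ≤ C) (hfc : Continuous f) (hf0 : f 0 = 0)
    (hfpos : ∀ t : ℝ, 0 < t → 0 < f t)
    (hfCinc : ∀ s ∈ Ioi ηb₀, ∀ t ∈ Ioi ηb₀, s ≤ t → f s ≤ C * f t)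
    (hF : ∀ t, F t = ∫ s in ηb₀..t, f s) :
    ∀ t, ηb₀ < t → F t * (1 + 1/C^2) ≤ F (2*t) := by
  intro t ht
  have ht0 : 0 < t := lt_of_le_of_lt hηb₀ ht
  have hC0 : (0:ℝ) < C := lt_of_lt_of_le one_pos hC
  have hft : 0 < f t := hfpos t ht0
  -- upper bound : F t ≤ C * f t * t
  have hub : F t ≤ C * f t * (t - ηb₀) := by
    have h1 : F t = ∫ s in Ioc ηb₀ t, f s := by
      rw [hF, intervalIntegral.integral_of_le ht.le]
    have h2 : ∫ s in Ioc ηb₀ t, f s ≤ ∫ _s in Ioc ηb₀ t, C * f t := by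
      refine setIntegral_mono_on (hfc.integrableOn_Ioc) (integrableOn_const ?_)
        measurableSet_Ioc ?_
      · rw [Real.volume_Ioc]; exact ENNReal.ofReal_ne_top
      · intro x hx
        exact hfCinc x hx.1 t ht hx.2
    have h3 : ∫ _s in Ioc ηb₀ t, C * f t = (t - ηb₀) * (C * f t) := by
      rw [setIntegral_const, Real.volume_real_Ioc_of_le ht.le]
      simp [smul_eq_mul]
    rw [h1]; rw [h3] at h2; linarith
  -- lower bound on F(2t) - F t
  have hlb : t * (f t / C) ≤ F (2*t) - F t := by
    have hsub := aux_Fsub hfc hF t (2*t)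
    have hmono : ∫ s in t..(2*t), (f t / C) ≤ ∫ s in t..(2*t), f s := by
      refine intervalIntegral.integral_mono_on (by linarith) intervalIntegrable_const
        (hfc.intervalIntegrable _ _) ?_
      intro x hx
      rw [div_le_iff₀ hC0]
      have := hfCinc t ht x (lt_of_lt_of_le ht hx.1) hx.1
      linarith
    rw [intervalIntegral.integral_const] at hmono
    simp only [smul_eq_mul] at hmono
    have : (2*t - t) * (f t / C) = t * (f t / C) := by ring
    linarith [hmono, hsub]
  have hub' : F t / C^2 ≤ t * (f t / C) := by
    rw [div_le_iff₀ (by positivity)]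
    have : C * f t * (t - ηb₀) ≤ C * f t * t := by nlinarith [mul_pos hC0 hft, hηb₀]
    calc F t ≤ C * f t * t := le_trans hub this
    _ = t * (f t / C) * C^2 := by field_simp
  have hFtnn : 0 ≤ F t := aux_Fnn hηb₀ hfc hf0 hfpos hF t ht.le
  have key : F t * (1 + 1/C^2) = F t + F t / C^2 := by field_simp
  rw [key]
  linarith

lemma aux_Fpow (hηb₀ : 0 ≤ ηb₀) (hC : 1 ≤ C) (hfc : Continuous f) (hf0 : f 0 = 0)
    (hfpos : ∀ t : ℝ, 0 < t → 0 < f t)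
    (hfCinc : ∀ s ∈ Ioi ηb₀, ∀ t ∈ Ioi ηb₀, s ≤ t → f s ≤ C * f t)
    (hF : ∀ t, F t = ∫ s in ηb₀..t, f s) :
    ∀ (k : ℕ) (t : ℝ), ηb₀ < t → F t * (1 + 1/C^2)^k ≤ F (2^k * t) := by
  intro k
  induction k with
  | zero => intro t ht; simp
  | succ k ih =>
    intro t ht
    have h2k : (1:ℝ) ≤ 2^k := one_le_pow₀ (by norm_num)
    have ht0 : 0 < t := lt_of_le_of_lt hηb₀ ht
    have htk : ηb₀ < 2^k * t := lt_of_lt_of_le ht (le_mul_of_one_le_left ht0.le h2k)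
    have hstep := aux_Fdouble hηb₀ hC hfc hf0 hfpos hfCinc hF (2^k * t) htk
    have hρ : (0:ℝ) < 1 + 1/C^2 := by positivity
    calc F t * (1 + 1/C^2)^(k+1) = (F t * (1 + 1/C^2)^k) * (1 + 1/C^2) := by ring
    _ ≤ F (2^k * t) * (1 + 1/C^2) := mul_le_mul_of_nonneg_right (ih t ht) hρ.le
    _ ≤ F (2*(2^k * t)) := hstep
    _ = F (2^(k+1) * t) := by ring_nf

set_option maxHeartbeats 2000000 in
/-- Proposition 3.12 (core): a solution of the Neumann problem for
`[℘ φ(w')]' = ℘ a f(w) l(|w'|)` blowing up at a finite `R` forces the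
Keller–Osserman condition at infinity. -/
theorem stmt_9
    (φ φ' l : ℝ → ℝ)
    (hφc : ContinuousOn φ (Ici 0)) (hφ0 : φ 0 = 0)
    (hφd : ∀ t : ℝ, 0 < t → HasDerivAt φ (φ' t) t)
    (hφ'c : ContinuousOn φ' (Ioi 0))
    (hφ'pos : ∀ t : ℝ, 0 < t → 0 < φ' t)
    (hlc : ContinuousOn l (Ici 0)) (hlpos : ∀ t ∈ Ici (0:ℝ), 0 < l t)
    (hint0 : IntegrableOn (fun s => s * φ' s / l s) (Ioo 0 1))
    (hintinf : ¬ IntegrableOn (fun s => s * φ' s / l s) (Ioi 1))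
    (K Kinv : ℝ → ℝ)
    (hK : ∀ t, K t = ∫ s in (0:ℝ)..t, s * φ' s / l s)
    (hKinv : ∀ t : ℝ, 0 ≤ t → Kinv (K t) = t)
    (C ηb₀ : ℝ) (hC : 1 ≤ C) (hηb₀ : 0 ≤ ηb₀)
    (f : ℝ → ℝ) (hfc : Continuous f) (hf0 : f 0 = 0)
    (hfpos : ∀ t : ℝ, 0 < t → 0 < f t)
    (hfCinc : CIncreasingOn C f (Ioi ηb₀))
    (p p' : ℝ → ℝ)
    (hpd : ∀ t ∈ Ici (0:ℝ), HasDerivWithinAt p (p' t) (Ici 0) t)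
    (hp'c : ContinuousOn p' (Ici (0:ℝ)))
    (hppos : ∀ t ∈ Ioi (0:ℝ), 0 < p t)
    (hp'nn : ∀ t ∈ Ioi (0:ℝ), 0 ≤ p' t)
    (a : ℝ → ℝ) (hac : ContinuousOn a (Ici (0:ℝ)))
    (hapos : ∀ t ∈ Ici (0:ℝ), 0 < a t)
    (R : ℝ) (hR : 0 < R)
    (w w' : ℝ → ℝ)
    (hwd : ∀ t ∈ Ico (0:ℝ) R, HasDerivWithinAt w (w' t) (Ico 0 R) t)
    (hw'c : ContinuousOn w' (Ico (0:ℝ) R))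
    (hw'0 : w' 0 = 0)
    (hwnn : ∀ t ∈ Ico (0:ℝ) R, 0 ≤ w t ∧ 0 ≤ w' t)
    (hODE : ∀ t ∈ Ioo (0:ℝ) R,
      HasDerivAt (fun s => p s * φ (w' s)) (p t * a t * f (w t) * l |w' t|) t)
    (hblow : Tendsto w (𝓝[<] R) atTop)
    (F : ℝ → ℝ) (hF : ∀ t, F t = ∫ s in ηb₀..t, f s) :
    ∃ T : ℝ, ηb₀ < T ∧ IntegrableOn (fun s => 1 / Kinv (F s)) (Ioi T) := by
  have hC0 : (0:ℝ) < C := lt_of_lt_of_le one_pos hC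
  -- J facts
  set J : ℝ → ℝ := fun s => s * φ' s / l s with hJdef
  have hJc : ContinuousOn J (Ioi 0) := by
    refine ContinuousOn.div (continuousOn_id.mul hφ'c) (hlc.mono Ioi_subset_Ici_self) ?_
    exact fun s hs => (hlpos s (mem_Ici.2 (le_of_lt hs))).ne'
  have hJpos : ∀ s ∈ Ioi (0:ℝ), 0 < J s := fun s hs =>
    div_pos (mul_pos hs (hφ'pos s hs)) (hlpos s (mem_Ici.2 (le_of_lt hs)))
  -- K facts
  have hKc : ContinuousOn K (Ici 0) := aux_Kcont hJc hint0 hK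
  have hKsm : StrictMonoOn K (Ici 0) := aux_Ksm hJc hJpos hint0 hK
  have hKsurj : ∀ y : ℝ, 0 ≤ y → ∃ x, 0 ≤ x ∧ K x = y := aux_Ksurj hJc hJpos hint0 hintinf hK
  have hKub : ∀ y : ℝ, ∃ x, 0 ≤ x ∧ y ≤ K x := aux_Kub hJc hJpos hint0 hintinf hK
  have hKd : ∀ x : ℝ, 0 < x → HasDerivAt K (J x) x := aux_Kd hJc hint0 hK
  have hK0 : K 0 = 0 := by rw [hK]; simp
  have hKnn : ∀ x : ℝ, 0 ≤ x → 0 ≤ K x := by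
    intro x hx
    rcases eq_or_lt_of_le hx with h | h
    · rw [← h, hK0]
    · rw [← hK0]; exact (hKsm self_mem_Ici hx h).le
  -- Kinv facts
  have hKinvmono : ∀ u v : ℝ, 0 ≤ u → u ≤ v → Kinv u ≤ Kinv v := by
    intro u v hu huv
    obtain ⟨x, hx0, hxK⟩ := hKsurj u hu
    obtain ⟨y, hy0, hyK⟩ := hKsurj v (le_trans hu huv)
    rw [← hxK, ← hyK, hKinv x hx0, hKinv y hy0]
    exact (hKsm.le_iff_le hx0 hy0).1 (by rw [hxK, hyK]; exact huv)
  have hKKinv : ∀ y : ℝ, 0 ≤ y → K (Kinv y) = y ∧ 0 ≤ Kinv y := by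
    intro y hy
    obtain ⟨x, hx0, hxK⟩ := hKsurj y hy
    rw [← hxK, hKinv x hx0]
    exact ⟨rfl, hx0⟩
  have hKinvcont : ∀ d : ℝ, 0 ≤ d → ContinuousOn Kinv (Icc 0 d) := by
    intro d hd
    obtain ⟨N, hN0, hNd⟩ := hKub d
    obtain ⟨g, hgc, hgl, hgr⟩ := exists_inv_on_Icc hN0 (hKc.mono (Icc_subset_Ici_self))
      (hKsm.mono Icc_subset_Ici_self)
    have hcongr : ∀ y ∈ Icc (K 0) (K N), Kinv y = g y := by
      intro y hy
      obtain ⟨hgy, hgymem⟩ := hgr y hy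
      conv_lhs => rw [← hgy]
      exact hKinv (g y) hgymem.1
    have : ContinuousOn Kinv (Icc (K 0) (K N)) := ContinuousOn.congr hgc hcongr
    refine this.mono ?_
    rw [hK0]
    exact Icc_subset_Icc le_rfl hNd
  -- φ facts
  have hφsm : StrictMonoOn φ (Ici 0) := by
    refine strictMonoOn_of_deriv_pos (convex_Ici 0) hφc ?_
    intro x hx
    rw [interior_Ici] at hx
    rw [(hφd x hx).deriv]
    exact hφ'pos x hx
  have hφpos : ∀ x : ℝ, 0 < x → 0 < φ x := by
    intro x hx
    rw [← hφ0]
    exact hφsm self_mem_Ici hx.le hx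
  have hφnn : ∀ x : ℝ, 0 ≤ x → 0 ≤ φ x := by
    intro x hx
    rcases eq_or_lt_of_le hx with h | h
    · rw [← h, hφ0]
    · exact (hφpos x h).le
  -- w facts
  have hwc : ContinuousOn w (Ico 0 R) := fun t ht => (hwd t ht).continuousWithinAt
  have hwD : ∀ t ∈ Ioo (0:ℝ) R, HasDerivAt w (w' t) t := by
    intro t ht
    exact (hwd t ⟨ht.1.le, ht.2⟩).hasDerivAt (Ico_mem_nhds ht.1 ht.2)
  have hw'cAt : ∀ t ∈ Ioo (0:ℝ) R, ContinuousAt w' t := by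
    intro t ht
    exact (hw'c t ⟨ht.1.le, ht.2⟩).continuousAt (Ico_mem_nhds ht.1 ht.2)
  have hwmono : MonotoneOn w (Ico 0 R) := by
    refine monotoneOn_of_deriv_nonneg (convex_Ico 0 R) hwc ?_ ?_
    · intro t ht
      rw [interior_Ico] at ht
      exact (hwD t ht).differentiableAt.differentiableWithinAt
    · intro t ht
      rw [interior_Ico] at ht
      rw [(hwD t ht).deriv]
      exact (hwnn t ⟨ht.1.le, ht.2⟩).2
  -- pick t1 with w t1 large
  have hIooR : ∀ u : ℝ, u < R → Ioo u R ∈ 𝓝[<] R := by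
    intro u hu
    exact Ioo_mem_nhdsLT_of_mem ⟨hu, le_rfl⟩
  obtain ⟨t1, ht1w, ht1⟩ : ∃ t1, ηb₀ + 1 ≤ w t1 ∧ t1 ∈ Ioo 0 R := by
    have h1 : ∀ᶠ t in 𝓝[<] R, ηb₀ + 1 ≤ w t := hblow.eventually_ge_atTop _
    exact (h1.and (eventually_of_mem (hIooR 0 hR) fun t ht => ht)).exists
  have ht1R : t1 ∈ Ico 0 R := ⟨ht1.1.le, ht1.2⟩
  -- on [t1, R), w ≥ ηb₀ + 1
  have hwlarge : ∀ t ∈ Ico t1 R, ηb₀ + 1 ≤ w t := by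
    intro t ht
    exact le_trans ht1w (hwmono ht1R ⟨le_trans ht1.1.le ht.1, ht.2⟩ ht.1)
  -- p facts
  have hpD : ∀ t : ℝ, 0 < t → HasDerivAt p (p' t) t := fun t ht =>
    (hpd t ht.le).hasDerivAt (Ici_mem_nhds ht)
  -- g = p * φ(w') strictly increasing on [t1, R)
  set g : ℝ → ℝ := fun s => p s * φ (w' s) with hgdef
  have habs : ∀ t ∈ Ico (0:ℝ) R, |w' t| = w' t := fun t ht => abs_of_nonneg (hwnn t ht).2
  have hsub1 : Ico t1 R ⊆ Ioo 0 R := fun s hs => ⟨lt_of_lt_of_le ht1.1 hs.1, hs.2⟩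
  have hgsm : StrictMonoOn g (Ico t1 R) := by
    refine strictMonoOn_of_deriv_pos (convex_Ico t1 R) ?_ ?_
    · intro s hs
      exact ((hODE s (hsub1 hs)).continuousAt).continuousWithinAt
    · intro s hs
      rw [interior_Ico] at hs
      have hsIoo : s ∈ Ioo 0 R := hsub1 ⟨hs.1.le, hs.2⟩
      rw [(hODE s hsIoo).deriv]
      have hws : 0 < w s := lt_of_lt_of_le (by linarith) (hwlarge s ⟨hs.1.le, hs.2⟩)
      exact mul_pos (mul_pos (mul_pos (hppos s hsIoo.1) (hapos s hsIoo.1.le))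
        (hfpos _ hws)) (hlpos _ (mem_Ici.2 (abs_nonneg _)))
  have hw'pos : ∀ t ∈ Ioo t1 R, 0 < w' t := by
    intro t ht
    have htIoo : t ∈ Ioo 0 R := hsub1 ⟨ht.1.le, ht.2⟩
    have hg1 : g t1 < g t := hgsm ⟨le_rfl, ht1.2⟩ ⟨ht.1.le, ht.2⟩ ht.1
    have hg0 : 0 ≤ g t1 := mul_nonneg (hppos t1 ht1.1).le (hφnn _ (hwnn t1 ht1R).2)
    have hgt : 0 < p t * φ (w' t) := lt_of_le_of_lt hg0 hg1
    have hφw : 0 < φ (w' t) := by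
      rcases mul_pos_iff.1 hgt with ⟨_, h⟩ | ⟨h, _⟩
      · exact h
      · exact absurd (hppos t htIoo.1) (by linarith)
    rcases eq_or_lt_of_le (hwnn t ⟨htIoo.1.le, ht.2⟩).2 with h | h
    · rw [← h, hφ0] at hφw; exact absurd hφw (lt_irrefl 0)
    · exact h
  -- derivative of φ(w') on (t1, R)
  set Dg : ℝ → ℝ := fun s =>
    (p s * a s * f (w s) * l (w' s) * p s - g s * p' s) / (p s)^2 with hDgdef
  have hψd : ∀ t ∈ Ioo t1 R, HasDerivAt (fun s => φ (w' s)) (Dg t) t := by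
    intro t ht
    have htIoo : t ∈ Ioo 0 R := hsub1 ⟨ht.1.le, ht.2⟩
    have hpne : p t ≠ 0 := (hppos t htIoo.1).ne'
    have hdiv : HasDerivAt (fun s => g s / p s)
        ((p t * a t * f (w t) * l |w' t| * p t - g t * p' t) / (p t)^2) t :=
      (hODE t htIoo).div (hpD t htIoo.1) hpne
    rw [habs t ⟨htIoo.1.le, ht.2⟩] at hdiv
    have hev : (fun s => φ (w' s)) =ᶠ[𝓝 t] (fun s => g s / p s) := by
      filter_upwards [Ioo_mem_nhds htIoo.1 htIoo.2] with s hs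
      rw [hgdef]
      field_simp [(hppos s hs.1).ne']
    exact hev.hasDerivAt_iff.2 hdiv
  have hψle : ∀ t ∈ Ioo t1 R, Dg t ≤ a t * f (w t) * l (w' t) := by
    intro t ht
    have htIoo : t ∈ Ioo 0 R := hsub1 ⟨ht.1.le, ht.2⟩
    have hp : 0 < p t := hppos t htIoo.1
    have hg0 : 0 ≤ g t := mul_nonneg hp.le (hφnn _ (hwnn t ⟨htIoo.1.le, ht.2⟩).2)
    have hp'0 : 0 ≤ p' t := hp'nn t htIoo.1
    rw [hDgdef, div_le_iff₀ (by positivity)]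
    nlinarith [mul_nonneg hg0 hp'0]
  -- derivative of w' on (t1, R)
  have hw'd : ∀ t ∈ Ioo t1 R, HasDerivAt w' (Dg t / φ' (w' t)) t := by
    intro t ht
    have htIoo : t ∈ Ioo 0 R := hsub1 ⟨ht.1.le, ht.2⟩
    set x₀ := w' t with hx₀def
    have hx₀ : 0 < x₀ := hw'pos t ht
    set M : ℝ := x₀ + 1 with hMdef
    have h0M : (0:ℝ) ≤ M := by linarith
    obtain ⟨q, hqc, hql, hqr⟩ := exists_inv_on_Icc h0M
      (hφc.mono (Icc_subset_Ici_self)) (hφsm.mono Icc_subset_Ici_self)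
    have hx₀M : x₀ ∈ Icc 0 M := ⟨hx₀.le, by linarith⟩
    have hφx₀ : φ x₀ ∈ Ioo (φ 0) (φ M) :=
      ⟨hφsm self_mem_Ici hx₀.le hx₀, hφsm hx₀.le (mem_Ici.2 (by positivity : (0:ℝ) ≤ M)) (by linarith)⟩
    have hqcontAt : ContinuousAt q (φ x₀) :=
      hqc.continuousAt (Icc_mem_nhds hφx₀.1 hφx₀.2)
    have hqx₀ : q (φ x₀) = x₀ := hql x₀ hx₀M
    have hfg : ∀ᶠ y in 𝓝 (φ x₀), φ (q y) = y := by
      filter_upwards [Ioo_mem_nhds hφx₀.1 hφx₀.2] with y hy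
      exact (hqr y (Ioo_subset_Icc_self hy)).1
    have hqd : HasDerivAt q (φ' x₀)⁻¹ (φ x₀) := by
      refine HasDerivAt.of_local_left_inverse hqcontAt ?_ (ne_of_gt (hφ'pos x₀ hx₀)) hfg
      rw [hqx₀]
      exact hφd x₀ hx₀
    have hcomp : HasDerivAt (fun s => q (φ (w' s))) ((φ' x₀)⁻¹ * Dg t) t :=
      HasDerivAt.comp t hqd (hψd t ht)
    have hev : (fun s => q (φ (w' s))) =ᶠ[𝓝 t] w' := by
      have h1 : {s : ℝ | w' s < M} ∈ 𝓝 t := by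
        have := (hw'cAt t htIoo).preimage_mem_nhds (Iio_mem_nhds (by linarith : x₀ < M))
        simpa [Set.preimage] using this
      filter_upwards [Ioo_mem_nhds htIoo.1 htIoo.2, h1] with s hs hsM
      exact hql (w' s) ⟨(hwnn s ⟨hs.1.le, hs.2⟩).2, hsM.le⟩
    have := hev.hasDerivAt_iff.1 hcomp
    rwa [inv_mul_eq_div] at this
  -- derivative of K(w') and its bound
  have hHd : ∀ t ∈ Ioo t1 R,
      HasDerivAt (fun s => K (w' s)) (J (w' t) * (Dg t / φ' (w' t))) t := by
    intro t ht
    exact HasDerivAt.comp t (hKd (w' t) (hw'pos t ht)) (hw'd t ht)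
  have hHle : ∀ t ∈ Ioo t1 R, J (w' t) * (Dg t / φ' (w' t)) ≤ a t * f (w t) * w' t := by
    intro t ht
    have htIoo : t ∈ Ioo 0 R := hsub1 ⟨ht.1.le, ht.2⟩
    set x := w' t with hxdef
    have hx : 0 < x := hw'pos t ht
    have hl : 0 < l x := hlpos x hx.le
    have hφ'x : 0 < φ' x := hφ'pos x hx
    have h1 : J x * (Dg t / φ' x) = x * Dg t / l x := by
      rw [hJdef]
      field_simp
    rw [h1]
    have h2 : x * Dg t / l x ≤ x * (a t * f (w t) * l x) / l x := by
      gcongr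
      exact hψle t ht
    refine le_trans h2 (le_of_eq ?_)
    field_simp
  -- choose t2, bound A for a, and B
  set t2 : ℝ := (t1 + R)/2 with ht2def
  have ht2 : t2 ∈ Ioo t1 R := ⟨by simp [ht2def]; linarith [ht1.2], by simp [ht2def]; linarith [ht1.2]⟩
  have ht2Ioo : t2 ∈ Ioo 0 R := hsub1 ⟨ht2.1.le, ht2.2⟩
  have ht20 : 0 < t2 := ht2Ioo.1
  have ht2Ico : t2 ∈ Ico 0 R := ⟨ht20.le, ht2.2⟩
  set B : ℝ := K (w' t2) with hBdef
  have hB0 : 0 ≤ B := hKnn _ (hwnn t2 ht2Ico).2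
  obtain ⟨xA, hxA, hAmax'⟩ := isCompact_Icc.exists_isMaxOn
    (⟨0, le_rfl, hR.le⟩ : (Icc (0:ℝ) R).Nonempty)
    (hac.mono (fun y (hy : y ∈ Icc (0:ℝ) R) => hy.1))
  have hAmax : ∀ y ∈ Icc (0:ℝ) R, a y ≤ a xA := fun y hy => hAmax' hy
  set A : ℝ := a xA with hAdef
  have hA0 : 0 < A := hapos xA hxA.1
  -- the integrand for the key comparison
  set u : ℝ → ℝ := fun x => a x * f (w x) * w' x with hudef
  have hucont : ContinuousOn u (Ico 0 R) := by
    exact ((hac.mono (fun y hy => hy.1)).mul (hfc.comp_continuousOn hwc)).mul hw'c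
  have hucont' : ContinuousOn u (Ioo 0 R) := hucont.mono Ioo_subset_Ico_self
  have hfw_cont : ContinuousOn (fun x => f (w x) * w' x) (Ico 0 R) :=
    (hfc.comp_continuousOn hwc).mul hw'c
  -- the key inequality
  have hKey : ∀ t ∈ Ico t2 R, K (w' t) ≤ B + A * (F (w t) - F (w t2)) := by
    intro t ht
    rcases eq_or_lt_of_le ht.1 with heq | ht2t
    · rw [← heq]; simp [hBdef]
    have hIcc_sub : Icc t2 t ⊆ Ioo t1 R := fun s hs =>
      ⟨lt_of_lt_of_le ht2.1 hs.1, lt_of_le_of_lt hs.2 ht.2⟩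
    have hIcc_sub' : Icc t2 t ⊆ Ico 0 R := fun s hs =>
      ⟨le_trans ht20.le hs.1, lt_of_le_of_lt hs.2 ht.2⟩
    set Φ : ℝ → ℝ := fun s => (∫ x in t2..s, u x) - K (w' s) with hΦdef
    have hΦd : ∀ s ∈ Icc t2 t, HasDerivAt Φ (u s - J (w' s) * (Dg s / φ' (w' s))) s := by
      intro s hs
      have hs1 : s ∈ Ioo t1 R := hIcc_sub hs
      have hsIoo : s ∈ Ioo 0 R := hsub1 ⟨hs1.1.le, hs1.2⟩
      have hM : HasDerivAt (fun r => ∫ x in t2..r, u x) (u s) s := by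
        refine intervalIntegral.integral_hasDerivAt_right ?_ ?_ ?_
        · refine (hucont.mono ?_).intervalIntegrable
          intro y hy
          rcases le_total t2 s with h | h
          · rw [uIcc_of_le h] at hy
            exact ⟨le_trans ht20.le hy.1, lt_of_le_of_lt hy.2 hsIoo.2⟩
          · rw [uIcc_of_ge h] at hy
            exact ⟨le_trans hsIoo.1.le hy.1, lt_of_le_of_lt hy.2 ht2.2⟩
        · exact hucont'.stronglyMeasurableAtFilter isOpen_Ioo s hsIoo
        · exact hucont'.continuousAt (Ioo_mem_nhds hsIoo.1 hsIoo.2)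
      exact hM.sub (hHd s hs1)
    have hΦmono : MonotoneOn Φ (Icc t2 t) := by
      refine monotoneOn_of_deriv_nonneg (convex_Icc t2 t)
        (fun s hs => (hΦd s hs).continuousAt.continuousWithinAt)
        (fun s hs => (hΦd s (interior_subset hs)).differentiableAt.differentiableWithinAt) ?_
      intro s hs
      rw [(hΦd s (interior_subset hs)).deriv]
      have := hHle s (hIcc_sub (interior_subset hs))
      simp only [hudef]
      linarith
    have h1 : Φ t2 ≤ Φ t := hΦmono ⟨le_rfl, ht2t.le⟩ ⟨ht2t.le, le_rfl⟩ ht2t.le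
    have hΦt2 : Φ t2 = -B := by
      simp [hΦdef, intervalIntegral.integral_same, hBdef]
    have hchg : ∫ x in t2..t, f (w x) * w' x = F (w t) - F (w t2) := by
      rw [aux_Fsub hfc hF (w t2) (w t)]
      have hder : ∀ x ∈ uIcc t2 t, HasDerivAt w (w' x) x := by
        intro x hx
        rw [uIcc_of_le ht2t.le] at hx
        exact hwD x (hsub1 ⟨(hIcc_sub hx).1.le, (hIcc_sub hx).2⟩)
      have hw'cc : ContinuousOn w' (uIcc t2 t) := by
        rw [uIcc_of_le ht2t.le]
        exact hw'c.mono hIcc_sub'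
      have := intervalIntegral.integral_comp_smul_deriv hder hw'cc hfc
      rw [← this]
      apply intervalIntegral.integral_congr
      intro x hx
      simp [smul_eq_mul, mul_comm]
    have hint1 : ∫ x in t2..t, u x ≤ A * (F (w t) - F (w t2)) := by
      have hmono2 : ∫ x in t2..t, u x ≤ ∫ x in t2..t, A * (f (w x) * w' x) := by
        refine intervalIntegral.integral_mono_on ht2t.le ?_ ?_ ?_
        · exact ContinuousOn.intervalIntegrable
            (by rw [uIcc_of_le ht2t.le]; exact hucont.mono hIcc_sub')
        · exact ContinuousOn.intervalIntegrable
            (by rw [uIcc_of_le ht2t.le]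
                exact continuous_const.continuousOn.mul (hfw_cont.mono hIcc_sub'))
        · intro x hx
          have hx' : x ∈ Ico 0 R := hIcc_sub' hx
          have hfnn' : 0 ≤ f (w x) := aux_fnn hf0 hfpos _ (hwnn x hx').1
          have hw'nn : 0 ≤ w' x := (hwnn x hx').2
          have haA : a x ≤ A := hAmax x ⟨hx'.1, hx'.2.le⟩
          calc a x * f (w x) * w' x = a x * (f (w x) * w' x) := by ring
          _ ≤ A * (f (w x) * w' x) :=
            mul_le_mul_of_nonneg_right haA (mul_nonneg hfnn' hw'nn)
      rw [intervalIntegral.integral_const_mul, hchg] at hmono2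
      exact hmono2
    rw [hΦt2] at h1
    have hΦt : Φ t = (∫ x in t2..t, u x) - K (w' t) := rfl
    rw [hΦt] at h1
    linarith
  -- F facts
  have hfCinc' : ∀ s ∈ Ioi ηb₀, ∀ t ∈ Ioi ηb₀, s ≤ t → f s ≤ C * f t := hfCinc
  have hFtop : Tendsto F atTop atTop := aux_Ftop hηb₀ hC hfc hf0 hfpos hfCinc' hF
  have hFmono : MonotoneOn F (Ici ηb₀) := aux_Fmono hηb₀ hfc hf0 hfpos hF
  have hFnn : ∀ x, ηb₀ ≤ x → 0 ≤ F x := aux_Fnn hηb₀ hfc hf0 hfpos hF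
  have hFcont : Continuous F := continuous_iff_continuousAt.2 fun t => (aux_Fd hfc hF t).continuousAt
  -- pick t3
  obtain ⟨t3, hFw3, ht3mem⟩ : ∃ t3, 1 ≤ F (w t3) ∧ t3 ∈ Ioo t2 R := by
    have h1 : ∀ᶠ t in 𝓝[<] R, 1 ≤ F (w t) := (hFtop.comp hblow).eventually_ge_atTop 1
    exact (h1.and (eventually_of_mem (hIooR t2 ht2.2) fun t ht => ht)).exists
  have ht3Ico : t3 ∈ Ico 0 R := ⟨le_trans ht20.le ht3mem.1.le, ht3mem.2⟩
  have ht1t3 : t1 ≤ t3 := le_trans ht2.1.le ht3mem.1.le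
  have hwt3 : ηb₀ + 1 ≤ w t3 := hwlarge t3 ⟨ht1t3, ht3mem.2⟩
  have hwt2 : ηb₀ ≤ w t2 := by
    have := hwlarge t2 ⟨ht2.1.le, ht2.2⟩; linarith
  -- the constants D, k, c
  set D : ℝ := B + A + 1 with hDdef
  have hD1 : 1 ≤ D := by simp [hDdef]; linarith
  have hρ : (1:ℝ) < 1 + 1/C^2 := by
    have : (0:ℝ) < 1/C^2 := by positivity
    linarith
  obtain ⟨k, hk⟩ : ∃ k : ℕ, D < (1 + 1/C^2)^k := pow_unbounded_of_one_lt D hρ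
  set c : ℝ := (2:ℝ)^k with hcdef
  have hc0 : (0:ℝ) < c := by positivity
  have hc1 : (1:ℝ) ≤ c := one_le_pow₀ (by norm_num)
  have hDF : ∀ s, ηb₀ < s → D * F s ≤ F (c * s) := by
    intro s hs
    have h1 := aux_Fpow hηb₀ hC hfc hf0 hfpos hfCinc' hF k s hs
    have h2 : D * F s ≤ (1 + 1/C^2)^k * F s := by
      exact mul_le_mul_of_nonneg_right hk.le (hFnn s hs.le)
    rw [hcdef]
    nlinarith [hFnn s hs.le]
  -- big inequality
  have hKF : ∀ t ∈ Ico t3 R, K (w' t) ≤ F (c * w t) := by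
    intro t ht
    have htIco : t ∈ Ico 0 R := ⟨le_trans ht3Ico.1 ht.1, ht.2⟩
    have ht2t : t ∈ Ico t2 R := ⟨le_trans ht3mem.1.le ht.1, ht.2⟩
    have h1 := hKey t ht2t
    have hwt : ηb₀ + 1 ≤ w t := hwlarge t ⟨le_trans ht1t3 ht.1, ht.2⟩
    have hFwt2nn : 0 ≤ F (w t2) := hFnn _ hwt2
    have hwt3t : w t3 ≤ w t := hwmono ht3Ico htIco ht.1
    have hFbig : 1 ≤ F (w t) := le_trans hFw3 (hFmono (by linarith [hwt3] : ηb₀ ≤ w t3)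
      (by linarith : ηb₀ ≤ w t) hwt3t)
    have h2 : K (w' t) ≤ D * F (w t) := by
      have h3 : A * (F (w t) - F (w t2)) ≤ A * F (w t) :=
        mul_le_mul_of_nonneg_left (by linarith) hA0.le
      have h4 : B + A * F (w t) ≤ (B + A + 1) * F (w t) := by nlinarith
      rw [hDdef]
      linarith
    exact le_trans h2 (hDF (w t) (by linarith))
  have hw'le : ∀ t ∈ Ico t3 R, w' t ≤ Kinv (F (c * w t)) := by
    intro t ht
    have htIco : t ∈ Ico 0 R := ⟨le_trans ht3Ico.1 ht.1, ht.2⟩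
    have h0 : 0 ≤ K (w' t) := hKnn _ (hwnn t htIco).2
    have := hKinvmono _ _ h0 (hKF t ht)
    rwa [hKinv _ (hwnn t htIco).2] at this
  -- the threshold T
  set T : ℝ := c * w t3 with hTdef
  have hwt3nn : 0 ≤ w t3 := (hwnn t3 ht3Ico).1
  have hTw3 : w t3 ≤ T := le_mul_of_one_le_left hwt3nn hc1
  have hT : ηb₀ < T := lt_of_lt_of_le (by linarith) hTw3
  have hFT1 : 1 ≤ F T := le_trans hFw3 (hFmono (by linarith : ηb₀ ≤ w t3) hT.le hTw3)
  obtain ⟨σ, hσ0, hσK⟩ := hKsurj 1 zero_le_one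
  have hσpos : 0 < σ := by
    rcases eq_or_lt_of_le hσ0 with h | h
    · exfalso; rw [← h, hK0] at hσK; norm_num at hσK
    · exact h
  have hKinvFge : ∀ y, T ≤ y → σ ≤ Kinv (F y) := by
    intro y hy
    have hFy : 1 ≤ F y := le_trans hFT1 (hFmono hT.le (le_trans hT.le hy) hy)
    have h2 := hKinvmono 1 (F y) zero_le_one hFy
    rwa [← hσK, hKinv σ hσ0] at h2
  set τ : ℝ → ℝ := fun y => 1 / Kinv (F y) with hτdef
  have hτnn : ∀ y, T ≤ y → 0 ≤ τ y := fun y hy =>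
    one_div_nonneg.2 (le_trans hσpos.le (hKinvFge y hy))
  have hτcont : ∀ V, T ≤ V → ContinuousOn τ (Icc T V) := by
    intro V hV
    obtain ⟨xm, hxm, hxmax'⟩ := isCompact_Icc.exists_isMaxOn
      (⟨T, le_rfl, hV⟩ : (Icc T V).Nonempty) hFcont.continuousOn
    have hxmax : ∀ y ∈ Icc T V, F y ≤ F xm := fun y hy => hxmax' hy
    have hdV : (0:ℝ) ≤ F xm := le_trans zero_le_one (le_trans hFT1 (hxmax T ⟨le_rfl, hV⟩))
    have hKinvc := hKinvcont (F xm) hdV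
    have hmaps : MapsTo F (Icc T V) (Icc 0 (F xm)) := fun y hy =>
      ⟨hFnn y (le_trans hT.le hy.1), hxmax y hy⟩
    have hcomp : ContinuousOn (fun y => Kinv (F y)) (Icc T V) :=
      hKinvc.comp hFcont.continuousOn hmaps
    refine continuousOn_const.div hcomp ?_
    intro y hy
    exact ne_of_gt (lt_of_lt_of_le hσpos (hKinvFge y hy.1))
  have hbound : ∀ V, T ≤ V → ∫ y in T..V, ‖τ y‖ ≤ c * (R - t3) := by
    intro V hV
    obtain ⟨tV, htVw, htVmem⟩ : ∃ tV, V ≤ c * w tV ∧ tV ∈ Ioo t3 R := by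
      have h1 : ∀ᶠ t in 𝓝[<] R, V ≤ c * w t :=
        (hblow.const_mul_atTop hc0).eventually_ge_atTop V
      exact (h1.and (eventually_of_mem (hIooR t3 ht3mem.2) fun t ht => ht)).exists
    have htVIco : tV ∈ Ico 0 R := ⟨le_trans ht3Ico.1 htVmem.1.le, htVmem.2⟩
    have ht3tV : t3 ≤ tV := htVmem.1.le
    have hwtV : w t3 ≤ w tV := hwmono ht3Ico htVIco ht3tV
    have hTcV : T ≤ c * w tV := by
      rw [hTdef]; exact mul_le_mul_of_nonneg_left hwtV hc0.le
    have hnorm : ∫ y in T..V, ‖τ y‖ = ∫ y in T..V, τ y := by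
      apply intervalIntegral.integral_congr
      intro y hy
      rw [uIcc_of_le hV] at hy
      exact Real.norm_of_nonneg (hτnn y hy.1)
    have hii2 : IntervalIntegrable τ volume T (c * w tV) :=
      ContinuousOn.intervalIntegrable (by rw [uIcc_of_le hTcV]; exact hτcont _ hTcV)
    have hmono3 : ∫ y in T..V, τ y ≤ ∫ y in T..(c * w tV), τ y := by
      refine intervalIntegral.integral_mono_interval le_rfl hV htVw ?_ hii2
      refine (ae_restrict_iff' measurableSet_Ioc).2 (Eventually.of_forall fun y hy => ?_)
      exact hτnn y hy.1.le
    have hIccsub : Icc t3 tV ⊆ Ico 0 R := fun y hy =>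
      ⟨le_trans ht3Ico.1 hy.1, lt_of_le_of_lt hy.2 htVmem.2⟩
    have himage : (fun s => c * w s) '' uIcc t3 tV ⊆ Icc T (c * w tV) := by
      rw [uIcc_of_le ht3tV]
      rintro _ ⟨x, hx, rfl⟩
      constructor
      · rw [hTdef]
        exact mul_le_mul_of_nonneg_left (hwmono ht3Ico (hIccsub hx) hx.1) hc0.le
      · exact mul_le_mul_of_nonneg_left (hwmono (hIccsub hx) htVIco hx.2) hc0.le
    have hτcv : ContinuousOn (fun x => τ (c * w x)) (Icc t3 tV) := by
      refine ContinuousOn.comp (g := τ) (f := fun x => c * w x) (t := Icc T (c * w tV))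
        (hτcont _ hTcV) (continuous_const.continuousOn.mul (hwc.mono hIccsub)) ?_
      intro x hx
      exact himage ⟨x, by rwa [uIcc_of_le ht3tV], rfl⟩
    have hsubst : ∫ y in T..(c * w tV), τ y = ∫ x in t3..tV, (c * w' x) • τ (c * w x) := by
      have hder : ∀ x ∈ uIcc t3 tV, HasDerivAt (fun s => c * w s) (c * w' x) x := by
        intro x hx
        rw [uIcc_of_le ht3tV] at hx
        have hxIoo : x ∈ Ioo 0 R := ⟨lt_of_lt_of_le ht2Ioo.1 (le_trans ht3mem.1.le hx.1),
          lt_of_le_of_lt hx.2 htVmem.2⟩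
        exact (hwD x hxIoo).const_mul c
      have hdc : ContinuousOn (fun s => c * w' s) (uIcc t3 tV) := by
        rw [uIcc_of_le ht3tV]
        exact continuous_const.continuousOn.mul (hw'c.mono hIccsub)
      have hgc2 : ContinuousOn τ ((fun s => c * w s) '' uIcc t3 tV) :=
        (hτcont _ hTcV).mono himage
      have h := intervalIntegral.integral_comp_smul_deriv' hder hdc hgc2
      simp only [Function.comp] at h
      rw [hTdef]
      exact h.symm
    have hlast : ∫ x in t3..tV, (c * w' x) • τ (c * w x) ≤ c * (R - t3) := by
      have h4 : ∫ x in t3..tV, (c * w' x) • τ (c * w x) ≤ ∫ _x in t3..tV, c := by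
        refine intervalIntegral.integral_mono_on ht3tV ?_ intervalIntegrable_const ?_
        · refine ContinuousOn.intervalIntegrable ?_
          rw [uIcc_of_le ht3tV]
          have hcw' : ContinuousOn (fun x => c * w' x) (Icc t3 tV) :=
            continuous_const.continuousOn.mul (hw'c.mono hIccsub)
          exact (hcw'.mul hτcv).congr (fun x hx => by simp only [smul_eq_mul, Pi.mul_apply])
        · intro x hx
          have hxIcoR : x ∈ Ico t3 R := ⟨hx.1, lt_of_le_of_lt hx.2 htVmem.2⟩
          have hTcx : T ≤ c * w x := by
            rw [hTdef]
            exact mul_le_mul_of_nonneg_left (hwmono ht3Ico (hIccsub hx) hx.1) hc0.le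
          have hden : 0 < Kinv (F (c * w x)) := lt_of_lt_of_le hσpos (hKinvFge _ hTcx)
          have hnum : w' x ≤ Kinv (F (c * w x)) := hw'le x hxIcoR
          have : (c * w' x) • τ (c * w x) = c * (w' x / Kinv (F (c * w x))) := by
            simp [hτdef, smul_eq_mul]; ring
          rw [this]
          have hle1 : w' x / Kinv (F (c * w x)) ≤ 1 := div_le_one_of_le₀ hnum hden.le
          nlinarith
      rw [intervalIntegral.integral_const, smul_eq_mul] at h4
      have : (tV - t3) * c ≤ (R - t3) * c :=
        mul_le_mul_of_nonneg_right (by linarith [htVmem.2]) hc0.le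
      nlinarith
    rw [hnorm]
    calc ∫ y in T..V, τ y ≤ ∫ y in T..(c * w tV), τ y := hmono3
    _ = ∫ x in t3..tV, (c * w' x) • τ (c * w x) := hsubst
    _ ≤ c * (R - t3) := hlast
  refine ⟨T, hT, ?_⟩
  have hfi : ∀ n : ℕ, IntegrableOn (fun s => 1 / Kinv (F s)) (Ioc T (T + n)) := by
    intro n
    have hTn : T ≤ T + n := le_add_of_nonneg_right n.cast_nonneg
    exact ((hτcont (T + n) hTn).integrableOn_compact isCompact_Icc).mono_set Ioc_subset_Icc_self
  refine integrableOn_Ioi_of_intervalIntegral_norm_bounded (c * (R - t3)) T hfi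
    (tendsto_atTop_add_const_left atTop T tendsto_natCast_atTop_atTop) ?_
  exact Eventually.of_forall fun n => hbound (T + n) (le_add_of_nonneg_right n.cast_nonneg)
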